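/- arXiv:2410.11470 — 8 statements merged into one kernel-verified Lean document; each statement's English description precedes it below -/
import Mathlib

section
/- Let V ⊆ M be finite and nonempty, let λ_1 ≥ 0, and set λ_i := 2^{i-1}·λ_1 for each i ≥ 1. Let I_0 := V and, for each i with 1 ≤ i ≤ τ, let I_i be a maximal λ_i-separated subset of I_{i-1}. Then for every i with 1 ≤ i ≤ τ, cl(I_i, V) ≤ 2λ_i. -/
/-- The k-center objective: `cl S V = max_{x ∈ V} min_{y ∈ S} d(x,y)`
(for finite nonempty `S`, `V`). -/
noncomputable def cl {M : Type*} [MetricSpace M] (S V : Finset M) : ℝ :=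
  sSup ((fun x => Metric.infDist x (S : Set M)) '' (V : Set M))

/-- For the chain `I 0 = V` and, for `1 ≤ i ≤ τ`, `I i` a maximal
`λ_i`-separated subset of `I (i-1)` with `λ_i = 2^(i-1) * λ_1`, we have
`cl(I i, V) ≤ 2 * λ_i` for all `1 ≤ i ≤ τ`. -/
theorem stmt_1 {M : Type*} [MetricSpace M] (V : Finset M) (hV : V.Nonempty)
    (lam1 : ℝ) (hlam1 : 0 ≤ lam1) (τ : ℕ) (I : ℕ → Finset M)
    (hI0 : I 0 = V)
    (hsub : ∀ i, 1 ≤ i → i ≤ τ → I i ⊆ I (i - 1))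
    (hsep : ∀ i, 1 ≤ i → i ≤ τ →
      ∀ y ∈ I i, ∀ y' ∈ I i, y ≠ y' → (2 : ℝ) ^ (i - 1) * lam1 < dist y y')
    (hmax : ∀ i, 1 ≤ i → i ≤ τ →
      ∀ y ∈ I (i - 1), ∃ z ∈ I i, dist y z ≤ (2 : ℝ) ^ (i - 1) * lam1) :
    ∀ i, 1 ≤ i → i ≤ τ → cl (I i) V ≤ 2 * ((2 : ℝ) ^ (i - 1) * lam1) := by
  -- Key claim: every point of V is within (2^i - 1) * lam1 of some point of I i.
  have key : ∀ i, 1 ≤ i → i ≤ τ → ∀ x ∈ V, ∃ z ∈ I i,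
      dist x z ≤ ((2 : ℝ) ^ i - 1) * lam1 := by
    intro i
    induction i with
    | zero => omega
    | succ n ih =>
      intro _ hle x hx
      rcases Nat.eq_zero_or_pos n with hn | hn
      · subst hn
        obtain ⟨z, hz, hdz⟩ := hmax 1 le_rfl hle x (by simpa [hI0] using hx)
        exact ⟨z, hz, by simpa using hdz.trans (by norm_num)⟩
      · obtain ⟨z, hz, hdz⟩ := ih hn (by omega) x hx
        obtain ⟨w, hw, hdw⟩ := hmax (n + 1) (by omega) hle z (by simpa using hz)
        refine ⟨w, hw, (dist_triangle x z w).trans ?_⟩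
        have : ((2:ℝ)^n - 1) * lam1 + (2:ℝ)^n * lam1 = ((2:ℝ)^(n+1) - 1) * lam1 := by
          ring
        rw [← this]
        exact add_le_add hdz (by simpa using hdw)
  intro i h1 h2
  have hIne : (I i).Nonempty := by
    obtain ⟨x, hx⟩ := hV
    obtain ⟨z, hz, _⟩ := key i h1 h2 x hx
    exact ⟨z, hz⟩
  apply Real.sSup_le
  · rintro r ⟨x, hx, rfl⟩
    obtain ⟨z, hz, hdz⟩ := key i h1 h2 x hx
    have h1' : Metric.infDist x (I i : Set M) ≤ dist x z :=
      Metric.infDist_le_dist_of_mem hz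
    refine h1'.trans (hdz.trans ?_)
    have : ((2:ℝ)^i - 1) ≤ 2 * (2:ℝ)^(i-1) := by
      have : (2:ℝ)^i = 2 * (2:ℝ)^(i-1) := by
        rw [← pow_succ']
        congr 1
        omega
      rw [this]
      linarith
    nlinarith [pow_nonneg (by norm_num : (0:ℝ) ≤ 2) (i-1)]
  · positivity
end

section
/- Let V ⊆ M be finite and nonempty, let k ≥ 1 be an integer, and let λ > 0. Suppose I ⊆ V satisfies: d(y,y') > λ for all distinct y,y' ∈ I, |I| > k, and cl(I,V) ≤ 2λ. Suppose further that I' ⊆ I is a maximal 2λ-separated subset of I. Then cl(I', V) ≤ 8·OPT_k(V). -/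
/-- The optimal k-center cost:
`OPT k V = min { cl(S,V) : S ⊆ V, S nonempty, |S| ≤ k }`. -/
noncomputable def OPT {M : Type*} [MetricSpace M] (k : ℕ) (V : Finset M) : ℝ :=
  sInf {r : ℝ | ∃ S : Finset M, S ⊆ V ∧ S.Nonempty ∧ S.card ≤ k ∧ r = cl S V}

/-- If `I ⊆ V` is λ-separated with `|I| > k` and `cl(I,V) ≤ 2λ`,
and `I' ⊆ I` is a maximal 2λ-separated subset of `I`, then `cl(I',V) ≤ 8 · OPT_k(V)`. -/
theorem stmt_4 {M : Type*} [MetricSpace M] (V : Finset M) (hV : V.Nonempty)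
    (k : ℕ) (hk : 1 ≤ k) (lam : ℝ) (hlam : 0 < lam)
    (I I' : Finset M) (hIV : I ⊆ V)
    (hsepI : ∀ y ∈ I, ∀ y' ∈ I, y ≠ y' → lam < dist y y')
    (hcard : k < I.card)
    (hclI : cl I V ≤ 2 * lam)
    (hI'I : I' ⊆ I)
    (hsepI' : ∀ y ∈ I', ∀ y' ∈ I', y ≠ y' → 2 * lam < dist y y')
    (hmaxI' : ∀ y ∈ I, ∃ z ∈ I', dist y z ≤ 2 * lam) :
    cl I' V ≤ 8 * OPT k V := by
  classical
  have hIne : I.Nonempty := Finset.card_pos.mp (Nat.lt_of_lt_of_le (Nat.pos_of_ne_zero (by omega)) hcard.le)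
  -- lower bound on OPT
  have hOPT : lam / 2 ≤ OPT k V := by
    obtain ⟨v, hv⟩ := hV
    apply le_csInf
    · exact ⟨cl {v} V, {v}, by simpa using hv, Finset.singleton_nonempty v, by simpa using hk, rfl⟩
    · rintro r ⟨S, hSV, hSne, hScard, rfl⟩
      have hSfin : IsCompact (S : Set M) := S.finite_toSet.isCompact
      have hSne' : (S : Set M).Nonempty := by exact_mod_cast hSne
      set f : M → M := fun y => Classical.choose (hSfin.exists_infDist_eq_dist hSne' y) with hf
      have hfspec : ∀ y : M, f y ∈ S ∧ Metric.infDist y (S : Set M) = dist y (f y) := by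
        intro y
        obtain ⟨h1, h2⟩ := Classical.choose_spec (hSfin.exists_infDist_eq_dist hSne' y)
        exact ⟨h1, h2⟩
      have hmap : ∀ y ∈ I, f y ∈ S := fun y _ => (hfspec y).1
      obtain ⟨y, hy, y', hy', hne, heq⟩ :=
        Finset.exists_ne_map_eq_of_card_lt_of_maps_to (hScard.trans_lt hcard) hmap
      have hbdd : BddAbove ((fun x => Metric.infDist x (S : Set M)) '' (V : Set M)) :=
        (V.finite_toSet.image _).bddAbove
      have h1 : dist y (f y) ≤ cl S V := by
        rw [← (hfspec y).2]
        exact le_csSup hbdd ⟨y, hIV hy, rfl⟩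
      have h2 : dist y' (f y') ≤ cl S V := by
        rw [← (hfspec y').2]
        exact le_csSup hbdd ⟨y', hIV hy', rfl⟩
      have hly : lam < dist y y' := hsepI y hy y' hy' hne
      have htri : dist y y' ≤ dist y (f y) + dist y' (f y') := by
        calc dist y y' ≤ dist y (f y) + dist (f y) y' := dist_triangle _ _ _
        _ = dist y (f y) + dist (f y') y' := by rw [heq]
        _ = dist y (f y) + dist y' (f y') := by rw [dist_comm (f y') y']
      linarith
  -- upper bound on cl I' V
  have hcl : cl I' V ≤ 4 * lam := by
    apply Real.sSup_le
    · rintro _ ⟨x, hx, rfl⟩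
      have hbddI : BddAbove ((fun x => Metric.infDist x (I : Set M)) '' (V : Set M)) :=
        (V.finite_toSet.image _).bddAbove
      have hxI : Metric.infDist x (I : Set M) ≤ 2 * lam :=
        le_trans (le_csSup hbddI ⟨x, hx, rfl⟩) hclI
      have hIne' : (I : Set M).Nonempty := by exact_mod_cast hIne
      obtain ⟨y, hy, hyd⟩ := I.finite_toSet.isCompact.exists_infDist_eq_dist hIne' x
      obtain ⟨z, hz, hzd⟩ := hmaxI' y hy
      have : Metric.infDist x (I' : Set M) ≤ dist x z :=
        Metric.infDist_le_dist_of_mem (by exact_mod_cast hz)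
      have htri : dist x z ≤ dist x y + dist y z := dist_triangle _ _ _
      rw [hyd] at hxI
      linarith
    · linarith
  linarith
end

section
/- Let V ⊆ M be finite and nonempty, let k ≥ 1 be an integer, let a, b ≥ 0 be reals, and let S ⊆ U ⊆ V with S nonempty and |S| ≤ k. Suppose cl(U,V) ≤ a·OPT_k(V) and cl(S,U) ≤ b·OPT_k(U). Then cl(S,V) ≤ (a + 2b)·OPT_k(V). -/
open Metric

lemma le_cl' {M : Type*} [MetricSpace M] {S V : Finset M} {x : M} (hx : x ∈ V) :
    infDist x (S : Set M) ≤ cl S V :=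
  le_csSup ((V.finite_toSet.image _).bddAbove) (Set.mem_image_of_mem _ hx)

lemma cl_le' {M : Type*} [MetricSpace M] {S V : Finset M} (hV : V.Nonempty) {r : ℝ}
    (h : ∀ x ∈ V, infDist x (S : Set M) ≤ r) : cl S V ≤ r := by
  apply csSup_le (Set.image_nonempty.mpr (Finset.coe_nonempty.mpr hV))
  rintro y ⟨x, hx, rfl⟩
  exact h x hx

lemma cl_nonneg' {M : Type*} [MetricSpace M] {S V : Finset M} (hV : V.Nonempty) :
    0 ≤ cl S V := by
  obtain ⟨x, hx⟩ := hV
  exact le_trans infDist_nonneg (le_cl' hx)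

lemma exists_nearest {M : Type*} [MetricSpace M] {S : Finset M} (hS : S.Nonempty) (x : M) :
    ∃ y ∈ S, infDist x (S : Set M) = dist x y := by
  obtain ⟨y, hy, h⟩ := S.finite_toSet.isCompact.exists_infDist_eq_dist
    (Finset.coe_nonempty.mpr hS) x
  exact ⟨y, hy, h⟩

/-- Triangle property: `cl S V ≤ cl U V + cl S U`. -/
lemma cl_triangle {M : Type*} [MetricSpace M] {S U V : Finset M}
    (hV : V.Nonempty) (hU : U.Nonempty) :
    cl S V ≤ cl U V + cl S U := by
  apply cl_le' hV
  intro x hx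
  obtain ⟨u, huU, hud⟩ := exists_nearest hU x
  calc infDist x (S : Set M) ≤ infDist u (S : Set M) + dist x u :=
        infDist_le_infDist_add_dist
    _ = dist x u + infDist u (S : Set M) := by ring
    _ ≤ cl U V + cl S U := by
        gcongr
        · rw [← hud]; exact le_cl' hx
        · exact le_cl' huU

/-- Composing an `a`-approximate sparsifier `U` with a `b`-approximate
solution `S` computed on `U` gives an `(a + 2b)`-approximate solution on `V`. -/
theorem stmt_7 {M : Type*} [MetricSpace M] (V : Finset M) (hV : V.Nonempty)
    (k : ℕ) (hk : 1 ≤ k) (a b : ℝ) (ha : 0 ≤ a) (hb : 0 ≤ b)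
    (U S : Finset M) (hS : S.Nonempty) (hSU : S ⊆ U) (hUV : U ⊆ V)
    (hScard : S.card ≤ k)
    (hU : cl U V ≤ a * OPT k V)
    (hSap : cl S U ≤ b * OPT k U) :
    cl S V ≤ (a + 2 * b) * OPT k V := by
  classical
  have hUne : U.Nonempty := hS.mono hSU
  -- the feasible set for V is nonempty and bounded below
  have hTVne : {r : ℝ | ∃ S' : Finset M, S' ⊆ V ∧ S'.Nonempty ∧ S'.card ≤ k ∧ r = cl S' V}.Nonempty :=
    ⟨cl S V, S, hSU.trans hUV, hS, hScard, rfl⟩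
  have hTUbdd : BddBelow {r : ℝ | ∃ S' : Finset M, S' ⊆ U ∧ S'.Nonempty ∧ S'.card ≤ k ∧ r = cl S' U} := by
    refine ⟨0, ?_⟩
    rintro r ⟨S', _, _, _, rfl⟩
    exact cl_nonneg' hUne
  -- OPT k U ≤ 2 * OPT k V
  have hOPTUV : OPT k U ≤ 2 * OPT k V := by
    have h2 : OPT k U / 2 ≤ OPT k V := by
      apply le_csInf hTVne
      rintro r ⟨T, hTV, hTne, hTcard, rfl⟩
      rw [div_le_iff₀ (by norm_num)]
      set r := cl T V with hr
      -- nearest point in T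
      have near : ∀ u : M, ∃ s ∈ T, ∀ s' ∈ T, dist u s ≤ dist u s' := by
        intro u
        obtain ⟨s, hs, h⟩ := T.exists_min_image (fun s => dist u s) hTne
        exact ⟨s, hs, h⟩
      choose nst hnstT hnst using near
      -- dist u (nst u) = infDist u T
      have hnear_eq : ∀ u : M, dist u (nst u) = infDist u (T : Set M) := by
        intro u
        obtain ⟨y, hy, hyeq⟩ := exists_nearest hTne u
        refine le_antisymm ?_ (infDist_le_dist_of_mem (by exact_mod_cast hnstT u))
        rw [hyeq]; exact hnst u y hy
      -- representative in U for each s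
      have repex : ∀ s : M, ∃ u : M, u ∈ U ∧ ((∃ u' ∈ U, nst u' = s) → nst u = s) := by
        intro s
        by_cases h : ∃ u' ∈ U, nst u' = s
        · obtain ⟨u', hu', heq⟩ := h
          exact ⟨u', hu', fun _ => heq⟩
        · exact ⟨hUne.choose, hUne.choose_spec, fun hc => absurd hc h⟩
      choose rep hrepU hrep using repex
      set S' : Finset M := T.image rep with hS'
      have hS'U : S' ⊆ U := by
        intro x hx
        rw [hS', Finset.mem_image] at hx
        obtain ⟨s, _, rfl⟩ := hx
        exact hrepU s
      have hS'ne : S'.Nonempty := hTne.image rep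
      have hS'card : S'.card ≤ k := le_trans (Finset.card_image_le) hTcard
      -- cl S' U ≤ 2 r
      have hclS' : cl S' U ≤ 2 * r := by
        apply cl_le' hUne
        intro u hu
        have hsT := hnstT u
        have hrepmem : rep (nst u) ∈ S' := Finset.mem_image_of_mem rep hsT
        have h1 : dist u (nst u) ≤ r := by
          rw [hnear_eq]; exact le_cl' (hUV hu)
        have hrepnst : nst (rep (nst u)) = nst u := hrep (nst u) ⟨u, hu, rfl⟩
        have h2 : dist (rep (nst u)) (nst u) ≤ r := by
          calc dist (rep (nst u)) (nst u)
              = dist (rep (nst u)) (nst (rep (nst u))) := by rw [hrepnst]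
            _ = infDist (rep (nst u)) (T : Set M) := hnear_eq _
            _ ≤ r := le_cl' (hUV (hrepU (nst u)))
        calc infDist u (S' : Set M) ≤ dist u (rep (nst u)) :=
              infDist_le_dist_of_mem (by exact_mod_cast hrepmem)
          _ ≤ dist u (nst u) + dist (nst u) (rep (nst u)) := dist_triangle _ _ _
          _ ≤ r + r := by rw [dist_comm (nst u)]; exact add_le_add h1 h2
          _ = 2 * r := by ring
      have : OPT k U ≤ cl S' U := csInf_le hTUbdd ⟨S', hS'U, hS'ne, hS'card, rfl⟩
      linarith
    linarith
  have hOPTVnn : 0 ≤ OPT k V := by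
    apply le_csInf hTVne
    rintro r ⟨S', _, _, _, rfl⟩
    exact cl_nonneg' hV
  calc cl S V ≤ cl U V + cl S U := cl_triangle hV hUne
    _ ≤ a * OPT k V + b * OPT k U := add_le_add hU hSap
    _ ≤ a * OPT k V + b * (2 * OPT k V) := by
        have := mul_le_mul_of_nonneg_left hOPTUV hb
        linarith
    _ = (a + 2 * b) * OPT k V := by ring
end

section
/- Let W, W' ⊆ M be finite sets with |W ⊕ W'| ≤ |W|/4, where ⊕ denotes symmetric difference, and let k ≥ 1 be an integer. Then μ_k^{1/2}(W') ≤ μ_k^1(W). -/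
/-- `mu k β W` is the least `μ ≥ 0` for which there exist pairwise disjoint subsets
`C 1, …, C k ⊆ W` with `Σ |C i| ≥ β·|W|` and `diam (C i) ≤ μ` for every `i`. -/
noncomputable def mu {M : Type*} [MetricSpace M] (k : ℕ) (β : ℝ) (W : Finset M) : ℝ :=
  sInf {μ : ℝ | 0 ≤ μ ∧ ∃ C : Fin k → Finset M,
    (∀ i, C i ⊆ W) ∧ (∀ i j, i ≠ j → Disjoint (C i) (C j)) ∧
    β * (W.card : ℝ) ≤ ∑ i, ((C i).card : ℝ) ∧
    ∀ i, Metric.diam ((C i : Finset M) : Set M) ≤ μ}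

/-- If `|W ⊕ W'| ≤ |W|/4` (symmetric difference),
then `μ_k^{1/2}(W') ≤ μ_k^1(W)`. -/
theorem stmt_11 {M : Type*} [MetricSpace M] [DecidableEq M] (W W' : Finset M)
    (h : ((symmDiff W W').card : ℝ) ≤ (W.card : ℝ) / 4)
    (k : ℕ) (hk : 1 ≤ k) :
    mu k (1 / 2) W' ≤ mu k 1 W := by
  unfold mu
  set S₁ : Set ℝ := {μ : ℝ | 0 ≤ μ ∧ ∃ C : Fin k → Finset M,
    (∀ i, C i ⊆ W) ∧ (∀ i j, i ≠ j → Disjoint (C i) (C j)) ∧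
    (1 : ℝ) * (W.card : ℝ) ≤ ∑ i, ((C i).card : ℝ) ∧
    ∀ i, Metric.diam ((C i : Finset M) : Set M) ≤ μ} with hS₁
  set S₂ : Set ℝ := {μ : ℝ | 0 ≤ μ ∧ ∃ C : Fin k → Finset M,
    (∀ i, C i ⊆ W') ∧ (∀ i j, i ≠ j → Disjoint (C i) (C j)) ∧
    (1 / 2 : ℝ) * (W'.card : ℝ) ≤ ∑ i, ((C i).card : ℝ) ∧
    ∀ i, Metric.diam ((C i : Finset M) : Set M) ≤ μ} with hS₂
  -- cardinality facts
  have hWW' : ((W \ W').card : ℝ) ≤ ((symmDiff W W').card : ℝ) := by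
    exact_mod_cast Finset.card_le_card (by
      intro x hx
      simp only [Finset.mem_symmDiff, Finset.mem_sdiff] at *
      exact Or.inl hx)
  have hW'W : ((W' \ W).card : ℝ) ≤ ((symmDiff W W').card : ℝ) := by
    exact_mod_cast Finset.card_le_card (by
      intro x hx
      simp only [Finset.mem_symmDiff, Finset.mem_sdiff] at *
      exact Or.inr hx)
  have hc1 : ((W ∩ W').card : ℝ) + ((W \ W').card : ℝ) = (W.card : ℝ) := by
    exact_mod_cast Finset.card_inter_add_card_sdiff W W'
  have hc2 : ((W' ∩ W).card : ℝ) + ((W' \ W).card : ℝ) = (W'.card : ℝ) := by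
    exact_mod_cast Finset.card_inter_add_card_sdiff W' W
  have hcomm : ((W' ∩ W).card : ℝ) = ((W ∩ W').card : ℝ) := by
    rw [Finset.inter_comm]
  have hkey : (1 / 2 : ℝ) * (W'.card : ℝ) ≤ ((W ∩ W').card : ℝ) := by
    have h0 : (0 : ℝ) ≤ (W.card : ℝ) := Nat.cast_nonneg _
    linarith
  -- S₁ ⊆ S₂
  have hsub : S₁ ⊆ S₂ := by
    rintro μ ⟨hμ0, C, hCsub, hCdisj, hCcard, hCdiam⟩
    refine ⟨hμ0, fun i => C i ∩ W', fun i => Finset.inter_subset_right, ?_, ?_, ?_⟩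
    · intro i j hij
      exact (hCdisj i j hij).mono Finset.inter_subset_left Finset.inter_subset_left
    · -- union of C i is W
      have hdisjU : ∀ i ∈ (Finset.univ : Finset (Fin k)), ∀ j ∈ Finset.univ,
          i ≠ j → Disjoint (C i) (C j) := fun i _ j _ hij => hCdisj i j hij
      have hUcard : (Finset.univ.biUnion C).card = ∑ i, (C i).card :=
        Finset.card_biUnion hdisjU
      have hUsub : Finset.univ.biUnion C ⊆ W := by
        intro x hx
        rcases Finset.mem_biUnion.1 hx with ⟨i, _, hxi⟩
        exact hCsub i hxi
      have hcardle : W.card ≤ (Finset.univ.biUnion C).card := by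
        rw [hUcard]
        have h' : (W.card : ℝ) ≤ ((∑ i, (C i).card : ℕ) : ℝ) := by
          push_cast
          linarith [hCcard]
        exact_mod_cast h'
      have hUeq : Finset.univ.biUnion C = W :=
        Finset.eq_of_subset_of_card_le hUsub hcardle
      have hdisjU' : ∀ i ∈ (Finset.univ : Finset (Fin k)), ∀ j ∈ Finset.univ,
          i ≠ j → Disjoint (C i ∩ W') (C j ∩ W') := fun i _ j _ hij =>
        (hCdisj i j hij).mono Finset.inter_subset_left Finset.inter_subset_left
      have hsum : ∑ i, (C i ∩ W').card = (W ∩ W').card := by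
        rw [← Finset.card_biUnion hdisjU']
        congr 1
        rw [← hUeq]
        ext x
        simp [Finset.mem_biUnion, Finset.mem_inter]
      calc (1 / 2 : ℝ) * (W'.card : ℝ) ≤ ((W ∩ W').card : ℝ) := hkey
        _ = ∑ i, ((C i ∩ W').card : ℝ) := by rw [← hsum]; push_cast; ring
    · intro i
      refine le_trans (Metric.diam_mono ?_ ?_) (hCdiam i)
      · intro x hx
        simp only [Finset.coe_inter, Set.mem_inter_iff, Finset.mem_coe] at hx ⊢
        exact hx.1
      · exact (Finset.finite_toSet _).isBounded
  -- S₁ nonempty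
  have hne : S₁.Nonempty := by
    have i0 : Fin k := ⟨0, hk⟩
    refine ⟨Metric.diam (W : Set M), Metric.diam_nonneg, fun i => if i = i0 then W else ∅,
      ?_, ?_, ?_, ?_⟩
    · intro i; dsimp only; split <;> simp
    · intro i j hij
      dsimp only
      split_ifs with h1 h2
      · exact absurd (h1.trans h2.symm) hij
      · exact Finset.disjoint_empty_right _
      · exact Finset.disjoint_empty_left _
      · exact Finset.disjoint_empty_left _
    · dsimp only
      have hcast : ∀ i : Fin k, (((if i = i0 then W else ∅) : Finset M).card : ℝ)
          = if i = i0 then (W.card : ℝ) else 0 := by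
        intro i; split <;> simp
      rw [Finset.sum_congr rfl (fun i _ => hcast i),
        Finset.sum_ite_eq' Finset.univ i0 (fun _ => (W.card : ℝ))]
      simp
    · intro i
      dsimp only
      split_ifs
      · exact le_refl _
      · simpa using Metric.diam_nonneg
  -- bdd below
  have hbdd : BddBelow S₂ := ⟨0, fun μ hμ => hμ.1⟩
  exact csInf_le_csInf hbdd hne hsub
end

section
/- Let V, V' ⊆ M be finite nonempty sets, let k ≥ 1 be an integer, and let s ≥ 0 be an integer with |V ⊕ V'| ≤ s, where ⊕ denotes symmetric difference. Then there exists a nonempty set S ⊆ V ∪ V' with |S| ≤ k + s and cl(S,V) ≤ OPT_k(V'). -/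
/-- Lazy-Updates Lemma: If `|V ⊕ V'| ≤ s`, then there is a nonempty
`S ⊆ V ∪ V'` with `|S| ≤ k + s` and `cl(S,V) ≤ OPT_k(V')`. -/
theorem stmt_12 {M : Type*} [MetricSpace M] [DecidableEq M] (V V' : Finset M)
    (hV : V.Nonempty) (hV' : V'.Nonempty) (k : ℕ) (hk : 1 ≤ k) (s : ℕ)
    (h : (symmDiff V V').card ≤ s) :
    ∃ S : Finset M, S ⊆ V ∪ V' ∧ S.Nonempty ∧ S.card ≤ k + s ∧ cl S V ≤ OPT k V' := by
  set R := {r : ℝ | ∃ S : Finset M, S ⊆ V' ∧ S.Nonempty ∧ S.card ≤ k ∧ r = cl S V'} with hR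
  have hRne : R.Nonempty := by
    obtain ⟨y, hy⟩ := hV'
    exact ⟨cl {y} V', {y}, Finset.singleton_subset_iff.mpr hy,
      Finset.singleton_nonempty y, by simpa using hk, rfl⟩
  have hRfin : R.Finite := by
    have hsub : R ⊆ (fun S : Finset M => cl S V') '' ↑V'.powerset := by
      rintro r ⟨S, hS, -, -, rfl⟩
      exact ⟨S, by simpa using hS, rfl⟩
    exact Set.Finite.subset (V'.powerset.finite_toSet.image _) hsub
  have hmem : OPT k V' ∈ R := hRne.csInf_mem hRfin
  obtain ⟨S', hS'sub, hS'ne, hS'card, hOPT⟩ := hmem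
  have hbdd : BddAbove ((fun x => Metric.infDist x ((S' : Finset M) : Set M)) '' (V' : Set M)) :=
    (V'.finite_toSet.image _).bddAbove
  have hclnn : 0 ≤ cl S' V' := by
    obtain ⟨y, hy⟩ := hV'
    have : Metric.infDist y (S' : Set M) ≤ cl S' V' :=
      le_csSup hbdd ⟨y, hy, rfl⟩
    exact le_trans Metric.infDist_nonneg this
  refine ⟨S' ∪ (V \ V'), ?_, hS'ne.mono Finset.subset_union_left, ?_, ?_⟩
  · intro x hx
    rcases Finset.mem_union.mp hx with h1 | h1
    · exact Finset.mem_union_right _ (hS'sub h1)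
    · exact Finset.mem_union_left _ (Finset.mem_sdiff.mp h1).1
  · calc (S' ∪ (V \ V')).card ≤ S'.card + (V \ V').card := Finset.card_union_le _ _
      _ ≤ k + s := by
          refine add_le_add hS'card (le_trans (Finset.card_le_card ?_) h)
          intro x hx
          rw [Finset.mem_symmDiff]
          exact Or.inl ⟨(Finset.mem_sdiff.mp hx).1, (Finset.mem_sdiff.mp hx).2⟩
  · rw [hOPT]
    apply Real.sSup_le _ hclnn
    rintro r ⟨x, hx, rfl⟩
    by_cases hxV' : x ∈ V'
    · have h1 : Metric.infDist x (((S' ∪ (V \ V')) : Finset M) : Set M)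
          ≤ Metric.infDist x (S' : Set M) := by
        apply Metric.infDist_le_infDist_of_subset _ (by exact_mod_cast hS'ne)
        exact_mod_cast (Finset.subset_union_left : S' ⊆ S' ∪ (V \ V'))
      exact le_trans h1 (le_csSup hbdd ⟨x, hxV', rfl⟩)
    · have hxS : x ∈ (((S' ∪ (V \ V')) : Finset M) : Set M) := by
        simp only [Finset.coe_union, Set.mem_union]
        exact Or.inr (by simp [Finset.mem_sdiff, hx, hxV'])
      show Metric.infDist x (((S' ∪ (V \ V')) : Finset M) : Set M) ≤ cl S' V'
      rw [Metric.infDist_zero_of_mem hxS]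
      exact hclnn
end

section
/- Let k ≥ 1 be an integer and let α_1, …, α_k be reals with 0 ≤ α_i ≤ 1 for every i and Σ_{i=1}^k α_i ≥ 1/2. Then Σ_{i=1}^k α_i·(1 − (1 − α_i)^{2k}) ≥ (1 − e^{−1})/2, where e is Euler's number. -/
/-- For reals `0 ≤ α_i ≤ 1` with `Σ α_i ≥ 1/2`,
`Σ α_i · (1 − (1 − α_i)^{2k}) ≥ (1 − e⁻¹)/2`. -/
theorem stmt_13 (k : ℕ) (hk : 1 ≤ k) (α : Fin k → ℝ)
    (h0 : ∀ i, 0 ≤ α i) (h1 : ∀ i, α i ≤ 1)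
    (hsum : (1 : ℝ) / 2 ≤ ∑ i, α i) :
    (1 - Real.exp (-1)) / 2 ≤ ∑ i, α i * (1 - (1 - α i) ^ (2 * k)) := by
  have hk0 : (0:ℝ) < (k:ℝ) := by exact_mod_cast hk
  have key : ∀ i, α i - Real.exp (-1) / (2*k) ≤ α i * (1 - (1 - α i) ^ (2 * k)) := by
    intro i
    set t : ℝ := 2 * k * α i with ht
    have htnn : 0 ≤ t := by have := h0 i; positivity
    have h2 : (1 - α i) ^ (2*k) ≤ Real.exp (-t) := by
      calc (1 - α i) ^ (2*k) ≤ (Real.exp (-α i)) ^ (2*k) := by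
            apply pow_le_pow_left₀ (by linarith [h1 i])
            linarith [Real.add_one_le_exp (-α i)]
        _ = Real.exp (-t) := by
            rw [← Real.exp_nat_mul]; congr 1; push_cast; ring
    have h3 : t * Real.exp (-t) ≤ Real.exp (-1) := by
      have h4 : t ≤ Real.exp (t - 1) := by linarith [Real.add_one_le_exp (t - 1)]
      have h5 : Real.exp (t-1) * Real.exp (-t) = Real.exp (-1) := by
        rw [← Real.exp_add]; ring_nf
      calc t * Real.exp (-t) ≤ Real.exp (t-1) * Real.exp (-t) :=
            mul_le_mul_of_nonneg_right h4 (Real.exp_pos _).le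
        _ = Real.exp (-1) := h5
    have h6 : α i * (1 - α i) ^ (2*k) ≤ Real.exp (-1) / (2*k) := by
      have : α i * (1 - α i) ^ (2*k) ≤ α i * Real.exp (-t) :=
        mul_le_mul_of_nonneg_left h2 (h0 i)
      have ha : α i * Real.exp (-t) = t * Real.exp (-t) / (2*k) := by
        field_simp [ht]; ring
      rw [ha] at this
      have : t * Real.exp (-t) / (2*k) ≤ Real.exp (-1) / (2*k) := by
        apply div_le_div_of_nonneg_right h3 (by positivity) |>.trans_eq rfl
      linarith [mul_le_mul_of_nonneg_left h2 (h0 i), ha ▸ this]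
    nlinarith [h6]
  have hsum2 : ∑ i, (α i - Real.exp (-1) / (2*k)) ≤ ∑ i, α i * (1 - (1 - α i) ^ (2 * k)) :=
    Finset.sum_le_sum (fun i _ => key i)
  have hconst : ∑ i : Fin k, (α i - Real.exp (-1) / (2*k)) =
      (∑ i, α i) - Real.exp (-1) / 2 := by
    rw [Finset.sum_sub_distrib, Finset.sum_const, Finset.card_univ, Fintype.card_fin]
    field_simp
    rw [nsmul_eq_mul, mul_div_left_comm, div_mul_cancel_right₀ hk0.ne']
    ring
  linarith [hsum2, hconst ▸ hsum2]
end

section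
/- Let W ⊆ M be finite and nonempty, let μ ≥ 0, let k ≥ 1 and s ≥ 1 be integers, and let C_1, …, C_k ⊆ W be pairwise disjoint subsets with diam(C_i) ≤ μ for every i. Let Y_1, …, Y_s be independent random points, each uniformly distributed on W, and let N := |{x ∈ W : min_{1 ≤ j ≤ s} d(x, Y_j) ≤ μ}|. Then E[N] ≥ Σ_{i=1}^k |C_i|·(1 − (1 − α_i)^s), where α_i := |C_i|/|W|. -/
/-- For i.i.d. uniform samples `Y_1, …, Y_s` from `W` (equivalently, a
uniform sample from `W^s`), the expected number of points of `W` within distance `μ` of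
the sample set is at least `Σ_i |C_i|·(1 − (1 − α_i)^s)` where `α_i = |C_i|/|W|`, whenever
the `C_i ⊆ W` are pairwise disjoint with `diam(C_i) ≤ μ`. -/
theorem stmt_15 {M : Type*} [MetricSpace M] (W : Finset M) (hW : W.Nonempty)
    (μ : ℝ) (hμ : 0 ≤ μ) (k s : ℕ) (hk : 1 ≤ k) (hs : 1 ≤ s)
    (C : Fin k → Finset M) (hCW : ∀ i, C i ⊆ W)
    (hdisj : ∀ i j, i ≠ j → Disjoint (C i) (C j))
    (hdiam : ∀ i, Metric.diam ((C i : Finset M) : Set M) ≤ μ) :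
    ∑ i, ((C i).card : ℝ) * (1 - (1 - ((C i).card : ℝ) / (W.card : ℝ)) ^ s)
      ≤ (∑ ω : Fin s → {x // x ∈ W},
          ((W.filter (fun x => ∃ j, dist x (ω j : M) ≤ μ)).card : ℝ))
        / (W.card : ℝ) ^ s := by
  classical
  have hn : (0:ℝ) < (W.card : ℝ) := by exact_mod_cast Finset.card_pos.mpr hW
  set n : ℝ := (W.card : ℝ) with hndef
  rw [le_div_iff₀ (by positivity)]
  -- rewrite each summand times n^s
  have key : ∀ i : Fin k,
      ((C i).card : ℝ) * (1 - (1 - ((C i).card : ℝ) / n) ^ s) * n ^ s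
        = ((C i).card : ℝ) * (n ^ s - (n - ((C i).card : ℝ)) ^ s) := by
    intro i
    have h1 : (1 - ((C i).card : ℝ) / n) * n = n - ((C i).card : ℝ) := by
      field_simp
    have h2 : (1 - ((C i).card : ℝ) / n) ^ s * n ^ s
        = (n - ((C i).card : ℝ)) ^ s := by
      rw [← mul_pow, h1]
    calc ((C i).card : ℝ) * (1 - (1 - ((C i).card : ℝ) / n) ^ s) * n ^ s
        = ((C i).card : ℝ) * (n ^ s - (1 - ((C i).card : ℝ) / n) ^ s * n ^ s) := by
          ring
      _ = ((C i).card : ℝ) * (n ^ s - (n - ((C i).card : ℝ)) ^ s) := by rw [h2]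
  rw [Finset.sum_mul]
  simp only [key]
  -- counting: for each i, the number of ω hitting C i
  have count : ∀ i : Fin k,
      (∑ ω : Fin s → {x // x ∈ W},
          (if ∃ j, ((ω j : M) ∈ C i) then (1:ℝ) else 0))
        = n ^ s - (n - ((C i).card : ℝ)) ^ s := by
    intro i
    have h1 : ∀ ω : Fin s → {x // x ∈ W},
        (if ∃ j, ((ω j : M) ∈ C i) then (1:ℝ) else 0)
          = 1 - ∏ j, (if ((ω j : M) ∉ C i) then (1:ℝ) else 0) := by
      intro ω
      rw [Fintype.prod_boole]
      by_cases h : ∃ j, ((ω j : M) ∈ C i)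
      · have h' : ¬ ∀ j, ((ω j : M) ∉ C i) := by
          push_neg; exact h
        simp [h, h']
      · have h' : ∀ j, ((ω j : M) ∉ C i) := by
          push_neg at h; exact h
        simp [h, h']
    simp only [h1, Finset.sum_sub_distrib]
    have hcard : (∑ _ω : Fin s → {x // x ∈ W}, (1:ℝ)) = n ^ s := by
      simp [Finset.card_univ, Fintype.card_fun, Fintype.card_coe, hndef]
    have hprod : (∑ ω : Fin s → {x // x ∈ W},
        ∏ j, (if ((ω j : M) ∉ C i) then (1:ℝ) else 0))
          = (n - ((C i).card : ℝ)) ^ s := by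
      rw [← Fintype.sum_pow (fun y : {x // x ∈ W} => if ((y : M) ∉ C i) then (1:ℝ) else 0) s]
      congr 1
      have : (∑ y : {x // x ∈ W}, (if ((y : M) ∉ C i) then (1:ℝ) else 0))
          = ∑ x ∈ W, (if x ∉ C i then (1:ℝ) else 0) := by
        rw [← Finset.sum_attach W (fun x => if x ∉ C i then (1:ℝ) else 0)]
        rfl
      rw [this, Finset.sum_boole]
      have hfilter : W.filter (fun x => x ∉ C i) = W \ C i := by
        ext x; simp [Finset.mem_sdiff]
      rw [hfilter, Finset.card_sdiff_of_subset (hCW i)]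
      have hle : (C i).card ≤ W.card := Finset.card_le_card (hCW i)
      push_cast [Nat.cast_sub hle]
      ring
    rw [hcard, hprod]
  -- main inequality
  have main : ∀ ω : Fin s → {x // x ∈ W},
      (∑ i : Fin k, (if ∃ j, ((ω j : M) ∈ C i) then ((C i).card : ℝ) else 0))
        ≤ ((W.filter (fun x => ∃ j, dist x (ω j : M) ≤ μ)).card : ℝ) := by
    intro ω
    set I : Finset (Fin k) := Finset.univ.filter (fun i => ∃ j, ((ω j : M) ∈ C i)) with hI
    have h1 : (∑ i : Fin k, (if ∃ j, ((ω j : M) ∈ C i) then ((C i).card : ℝ) else 0))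
        = ∑ i ∈ I, ((C i).card : ℝ) := by
      rw [hI, Finset.sum_filter]
    rw [h1]
    have h2 : ∑ i ∈ I, ((C i).card : ℝ) = ((I.biUnion C).card : ℝ) := by
      rw [Finset.card_biUnion]
      · push_cast; rfl
      · intro a _ b _ hab; exact hdisj a b hab
    rw [h2]
    have h3 : I.biUnion C ⊆ W.filter (fun x => ∃ j, dist x (ω j : M) ≤ μ) := by
      intro x hx
      rcases Finset.mem_biUnion.mp hx with ⟨i, hiI, hxCi⟩
      rcases Finset.mem_filter.mp hiI with ⟨-, j, hj⟩
      refine Finset.mem_filter.mpr ⟨hCW i hxCi, j, ?_⟩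
      have hb : Bornology.IsBounded ((C i : Finset M) : Set M) :=
        (C i).finite_toSet.isBounded
      exact le_trans (Metric.dist_le_diam_of_mem hb (by exact_mod_cast hxCi)
        (by exact_mod_cast hj)) (hdiam i)
    exact_mod_cast Finset.card_le_card h3
  calc ∑ i : Fin k, ((C i).card : ℝ) * (n ^ s - (n - ((C i).card : ℝ)) ^ s)
      = ∑ i : Fin k, ((C i).card : ℝ) *
          (∑ ω : Fin s → {x // x ∈ W},
            (if ∃ j, ((ω j : M) ∈ C i) then (1:ℝ) else 0)) := by
        simp only [count]
    _ = ∑ ω : Fin s → {x // x ∈ W},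
          ∑ i : Fin k, (if ∃ j, ((ω j : M) ∈ C i) then ((C i).card : ℝ) else 0) := by
        rw [Finset.sum_comm]
        apply Finset.sum_congr rfl
        intro i _
        rw [Finset.mul_sum]
        apply Finset.sum_congr rfl
        intro ω _
        by_cases h : ∃ j, ((ω j : M) ∈ C i) <;> simp [h]
    _ ≤ ∑ ω : Fin s → {x // x ∈ W},
          ((W.filter (fun x => ∃ j, dist x (ω j : M) ≤ μ)).card : ℝ) :=
        Finset.sum_le_sum (fun ω _ => main ω)
end

section
/- Let W ⊆ M be finite and nonempty, let k ≥ 1 be an integer, and let μ* := μ_k^{1/2}(W). Let Y_1, …, Y_{2k} be independent random points, each uniformly distributed on W, and let N := |{x ∈ W : min_{1 ≤ j ≤ 2k} d(x, Y_j) ≤ μ*}|. Then P(N ≥ |W|/4) ≥ (1 − 2e^{−1})/3, where e is Euler's number. -/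
section AuxProof

-- t * exp (-t) ≤ exp (-1)
lemma aux_t (t : ℝ) (ht : 0 ≤ t) : t * Real.exp (-t) ≤ Real.exp (-1) := by
  have h : t ≤ Real.exp (t - 1) := by
    have := Real.add_one_le_exp (t - 1)
    linarith
  calc t * Real.exp (-t) ≤ Real.exp (t - 1) * Real.exp (-t) := by
        apply mul_le_mul_of_nonneg_right h (Real.exp_nonneg _)
    _ = Real.exp (-1) := by rw [← Real.exp_add]; ring_nf

-- p (1-p)^m ≤ 1/(m e)
lemma aux_p (p : ℝ) (hp0 : 0 ≤ p) (hp1 : p ≤ 1) (m : ℕ) (hm : 1 ≤ m) :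
    p * (1 - p) ^ m ≤ 1 / (m * Real.exp 1) := by
  have h1 : (1 - p) ^ m ≤ Real.exp (-p) ^ m := by
    apply pow_le_pow_left₀ (by linarith) ?_
    have := Real.add_one_le_exp (-p); linarith
  have h2 : p * (1 - p) ^ m ≤ p * Real.exp (-(m * p)) := by
    have : Real.exp (-p) ^ m = Real.exp (-(m*p)) := by
      rw [← Real.exp_nat_mul]; ring_nf
    rw [← this]
    exact mul_le_mul_of_nonneg_left h1 hp0
  have hmpos : (0:ℝ) < m := by exact_mod_cast hm
  have h3 := aux_t (m * p) (by positivity)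
  have hepos := Real.exp_pos (1:ℝ)
  have h4 : p * Real.exp (-(m*p)) ≤ Real.exp (-1) / m := by
    rw [le_div_iff₀ hmpos]
    nlinarith [Real.exp_nonneg (-(m*p))]
  calc p * (1 - p)^m ≤ Real.exp (-1) / m := le_trans h2 h4
    _ = 1 / (m * Real.exp 1) := by
        rw [Real.exp_neg]; field_simp

lemma aux_cn (c n : ℝ) (hc : 0 ≤ c) (hcn : c ≤ n) (m : ℕ) (hm : 1 ≤ m) :
    c * (n - c) ^ m ≤ n ^ m * n / (m * Real.exp 1) := by
  rcases eq_or_lt_of_le (le_trans hc hcn) with h | hn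
  · have hn0 : n = 0 := h.symm
    have hc0 : c = 0 := le_antisymm (hn0 ▸ hcn) hc
    simp [hc0, hn0]
  · set p := c / n with hp
    have hp0 : 0 ≤ p := div_nonneg hc hn.le
    have hp1 : p ≤ 1 := (div_le_one hn).mpr hcn
    have hcp : c = n * p := by rw [hp, mul_div_assoc', mul_div_cancel_left₀ _ hn.ne']
    have hnc : n - c = n * (1 - p) := by rw [hcp]; ring
    have key := aux_p p hp0 hp1 m hm
    have hmpos : (0:ℝ) < m := by exact_mod_cast hm
    have hpos : (0:ℝ) < m * Real.exp 1 := by positivity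
    calc c * (n - c) ^ m = n ^ m * n * (p * (1 - p) ^ m) := by
          rw [hnc, hcp, mul_pow]; ring
      _ ≤ n ^ m * n * (1 / (m * Real.exp 1)) := by
          apply mul_le_mul_of_nonneg_left key (by positivity)
      _ = n ^ m * n / (m * Real.exp 1) := by ring

lemma count_miss {M : Type*} [MetricSpace M] (W : Finset M) (m : ℕ) (B : Finset M)
    (hB : B ⊆ W) [DecidablePred (fun ω : Fin m → {x // x ∈ W} => ∃ j, (ω j : M) ∈ B)] :
    ((Finset.univ : Finset (Fin m → {x // x ∈ W})).filter
        fun ω => ¬ ∃ j, (ω j : M) ∈ B).card = (W.card - B.card) ^ m := by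
  classical
  have heq : ((Finset.univ : Finset (Fin m → {x // x ∈ W})).filter
        fun ω => ¬ ∃ j, (ω j : M) ∈ B)
      = Fintype.piFinset (fun _ : Fin m =>
          Finset.univ.filter fun y : {x // x ∈ W} => (y : M) ∉ B) := by
    ext ω
    simp [Fintype.mem_piFinset, not_exists]
  rw [heq, Fintype.card_piFinset]
  have hmemcard : (Finset.univ.filter fun y : {x // x ∈ W} => (y : M) ∈ B).card = B.card := by
    apply Finset.card_bij (fun (a : {x // x ∈ W}) _ => (a : M))
    · intro a ha; simpa using (Finset.mem_filter.mp ha).2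
    · intro a _ b _ h; exact Subtype.ext h
    · intro b hb; exact ⟨⟨b, hB hb⟩, by simp [hb], rfl⟩
  have hcompl : (Finset.univ.filter fun y : {x // x ∈ W} => (y : M) ∉ B).card
      = W.card - B.card := by
    have := Finset.card_filter_add_card_filter_not
      (s := (Finset.univ : Finset {x // x ∈ W})) (p := fun y => (y : M) ∈ B)
    rw [Finset.card_univ, Fintype.card_coe, hmemcard] at this
    omega
  rw [Finset.prod_congr rfl fun j _ => hcompl, Finset.prod_const, Finset.card_univ,
    Fintype.card_fin]

lemma sum_card_le {M : Type*} [MetricSpace M] (W : Finset M) (k : ℕ)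
    (C : Fin k → Finset M) (hsub : ∀ i, C i ⊆ W)
    (hdisj : ∀ i j, i ≠ j → Disjoint (C i) (C j)) :
    ∑ i, (C i).card ≤ W.card := by
  classical
  rw [← Finset.card_biUnion (fun i _ => fun j _ hij => hdisj i j hij)]
  exact Finset.card_le_card (Finset.biUnion_subset.mpr fun i _ => hsub i)

lemma X_le_N {M : Type*} [MetricSpace M] (W : Finset M) (k m : ℕ)
    (C : Fin k → Finset M) (hsub : ∀ i, C i ⊆ W)
    (hdisj : ∀ i j, i ≠ j → Disjoint (C i) (C j)) (μ : ℝ)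
    (hdiam : ∀ i, Metric.diam ((C i : Finset M) : Set M) ≤ μ)
    (ω : Fin m → {x // x ∈ W})
    [∀ i, Decidable (∃ j, (ω j : M) ∈ C i)]
    [DecidablePred (fun x : M => ∃ j, dist x (ω j : M) ≤ μ)] :
    (∑ i, if ∃ j, (ω j : M) ∈ C i then ((C i).card : ℝ) else 0)
      ≤ ((W.filter fun x => ∃ j, dist x (ω j : M) ≤ μ).card : ℝ) := by
  classical
  set D : Fin k → Finset M := fun i => if ∃ j, (ω j : M) ∈ C i then C i else ∅ with hD
  have hDC : ∀ i, D i ⊆ C i := by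
    intro i; rw [hD]; dsimp only; split
    · exact Finset.Subset.refl _
    · exact Finset.empty_subset _
  have hDsub : ∀ i, D i ⊆ W.filter fun x => ∃ j, dist x (ω j : M) ≤ μ := by
    intro i x hx
    rw [hD] at hx; dsimp only at hx
    split at hx
    · rename_i h
      obtain ⟨j, hj⟩ := h
      refine Finset.mem_filter.mpr ⟨hsub i hx, j, ?_⟩
      refine le_trans ?_ (hdiam i)
      exact Metric.dist_le_diam_of_mem ((C i).finite_toSet.isBounded)
        (Finset.mem_coe.mpr hx) (Finset.mem_coe.mpr hj)
    · exact absurd hx (Finset.notMem_empty x)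
  have hcard : ∀ i, (D i).card = if ∃ j, (ω j : M) ∈ C i then (C i).card else 0 := by
    intro i; rw [hD]; dsimp only; split <;> simp
  have hnat : ∑ i, (D i).card ≤ (W.filter fun x => ∃ j, dist x (ω j : M) ≤ μ).card := by
    rw [← Finset.card_biUnion (fun i _ => fun j _ hij => (hdisj i j hij).mono (hDC i) (hDC j))]
    exact Finset.card_le_card (Finset.biUnion_subset.mpr fun i _ => hDsub i)
  calc (∑ i, if ∃ j, (ω j : M) ∈ C i then ((C i).card : ℝ) else 0)
      = ((∑ i, (D i).card : ℕ) : ℝ) := by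
        push_cast
        exact Finset.sum_congr rfl fun i _ => by rw [hcard i]; split <;> simp
    _ ≤ _ := by exact_mod_cast hnat

lemma X_le_n {M : Type*} [MetricSpace M] (W : Finset M) (k m : ℕ)
    (C : Fin k → Finset M) (hsub : ∀ i, C i ⊆ W)
    (hdisj : ∀ i j, i ≠ j → Disjoint (C i) (C j))
    (ω : Fin m → {x // x ∈ W}) [∀ i, Decidable (∃ j, (ω j : M) ∈ C i)] :
    (∑ i, if ∃ j, (ω j : M) ∈ C i then ((C i).card : ℝ) else 0) ≤ (W.card : ℝ) := by
  have h1 : (∑ i, if ∃ j, (ω j : M) ∈ C i then ((C i).card : ℝ) else 0)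
      ≤ ∑ i, ((C i).card : ℝ) := by
    apply Finset.sum_le_sum
    intro i _
    split
    · exact le_refl _
    · positivity
  refine le_trans h1 ?_
  exact_mod_cast Nat.cast_le.mpr (sum_card_le W k C hsub hdisj)
lemma mu_attained {M : Type*} [MetricSpace M] (W : Finset M) (k : ℕ) (hk : 1 ≤ k) :
    ∃ C : Fin k → Finset M,
    (∀ i, C i ⊆ W) ∧ (∀ i j, i ≠ j → Disjoint (C i) (C j)) ∧
    (1/2 : ℝ) * (W.card : ℝ) ≤ ∑ i, ((C i).card : ℝ) ∧
    ∀ i, Metric.diam ((C i : Finset M) : Set M) ≤ mu k (1/2) W := by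
  classical
  have i0 : Fin k := ⟨0, hk⟩
  haveI : Nonempty (Fin k) := ⟨i0⟩
  set S := {μ : ℝ | 0 ≤ μ ∧ ∃ C : Fin k → Finset M,
    (∀ i, C i ⊆ W) ∧ (∀ i j, i ≠ j → Disjoint (C i) (C j)) ∧
    (1/2 : ℝ) * (W.card : ℝ) ≤ ∑ i, ((C i).card : ℝ) ∧
    ∀ i, Metric.diam ((C i : Finset M) : Set M) ≤ μ} with hS
  set A : Finset (Fin k → Finset M) :=
    (Fintype.piFinset fun _ => W.powerset).filter
      (fun C => (∀ i j, i ≠ j → Disjoint (C i) (C j)) ∧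
        (1/2 : ℝ) * (W.card : ℝ) ≤ ∑ i, ((C i).card : ℝ)) with hA
  have hmemA : ∀ C : Fin k → Finset M, C ∈ A ↔
      (∀ i, C i ⊆ W) ∧ (∀ i j, i ≠ j → Disjoint (C i) (C j)) ∧
      (1/2 : ℝ) * (W.card : ℝ) ≤ ∑ i, ((C i).card : ℝ) := by
    intro C
    simp only [hA, Finset.mem_filter, Fintype.mem_piFinset, Finset.mem_powerset]
  -- A is nonempty
  have hAne : A.Nonempty := by
    refine ⟨fun i => if i = i0 then W else ∅, (hmemA _).mpr ⟨?_, ?_, ?_⟩⟩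
    · intro i; split <;> simp
    · intro i j hij
      rcases eq_or_ne i i0 with h | h
      · have : j ≠ i0 := by rw [h] at hij; exact hij.symm
        simp [h, this]
      · simp [h]
    · have h : ∑ i, (((if i = i0 then W else ∅) : Finset M).card : ℝ) = W.card := by
        simp [apply_ite Finset.card]
      rw [h]
      have : (0:ℝ) ≤ (W.card : ℝ) := by positivity
      linarith
  obtain ⟨C1, hC1A, hC1min⟩ := A.exists_min_image
    (fun C => Finset.univ.sup' Finset.univ_nonempty
      (fun i => Metric.diam ((C i : Finset M) : Set M))) hAne
  have hC1 := (hmemA C1).mp hC1A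
  -- Finset.univ.sup' Finset.univ_nonempty (fun i => Metric.diam ((C1 i : Finset M) : Set M)) is a lower bound of S
  have hlb : ∀ μ ∈ S, Finset.univ.sup' Finset.univ_nonempty (fun i => Metric.diam ((C1 i : Finset M) : Set M)) ≤ μ := by
    rintro μ ⟨hμ0, C, hsub, hdisj, hcard, hdiam⟩
    have hCA : C ∈ A := (hmemA C).mpr ⟨hsub, hdisj, hcard⟩
    refine le_trans (hC1min C hCA) ?_
    exact Finset.sup'_le _ _ fun i _ => hdiam i
  -- Finset.univ.sup' Finset.univ_nonempty (fun i => Metric.diam ((C1 i : Finset M) : Set M)) ∈ S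
  have hgmem : Finset.univ.sup' Finset.univ_nonempty (fun i => Metric.diam ((C1 i : Finset M) : Set M)) ∈ S := by
    refine ⟨?_, C1, hC1.1, hC1.2.1, hC1.2.2, ?_⟩
    · exact le_trans Metric.diam_nonneg (Finset.le_sup' (fun i => Metric.diam ((C1 i : Finset M) : Set M)) (Finset.mem_univ i0))
    · intro i; exact Finset.le_sup' (fun i => Metric.diam ((C1 i : Finset M) : Set M)) (Finset.mem_univ i)
  have hmu : mu k (1/2) W = Finset.univ.sup' Finset.univ_nonempty (fun i => Metric.diam ((C1 i : Finset M) : Set M)) := by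
    apply le_antisymm
    · exact csInf_le ⟨Finset.univ.sup' Finset.univ_nonempty (fun i => Metric.diam ((C1 i : Finset M) : Set M)), hlb⟩ hgmem
    · exact le_csInf ⟨Finset.univ.sup' Finset.univ_nonempty (fun i => Metric.diam ((C1 i : Finset M) : Set M)), hgmem⟩ hlb
  exact ⟨C1, hC1.1, hC1.2.1, hC1.2.2, fun i => hmu ▸ Finset.le_sup' (fun i => Metric.diam ((C1 i : Finset M) : Set M)) (Finset.mem_univ i)⟩

end AuxProof

/-- AlmostCover: Sampling `2k` points i.i.d. uniformly from `W`
(equivalently, a uniform sample from `W^{2k}`), with probability at least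
`(1 − 2e⁻¹)/3` at least a quarter of the points of `W` lie within distance
`μ* = μ_k^{1/2}(W)` of the sample set. -/
theorem stmt_16 {M : Type*} [MetricSpace M] (W : Finset M) (hW : W.Nonempty)
    (k : ℕ) (hk : 1 ≤ k) :
    (1 - 2 * Real.exp (-1)) / 3 ≤
      (((Finset.univ : Finset (Fin (2 * k) → {x // x ∈ W})).filter
          (fun ω => (W.card : ℝ) / 4 ≤
            ((W.filter (fun x => ∃ j, dist x (ω j : M) ≤ mu k (1 / 2) W)).card : ℝ))).card : ℝ)
        / (W.card : ℝ) ^ (2 * k) := by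
  classical
  obtain ⟨C, hsub, hdisj, hcard, hdiam⟩ := mu_attained W k hk
  set μ : ℝ := mu k (1/2) W with hμ
  set n : ℕ := W.card with hn
  have hnpos : 0 < n := Finset.card_pos.mpr hW
  have hnR : (0:ℝ) < (n:ℝ) := by exact_mod_cast hnpos
  set m : ℕ := 2 * k with hmdef
  have hm1 : 1 ≤ m := by omega
  have hPow : (0:ℝ) < (n:ℝ) ^ m := by positivity
  set X : (Fin m → {x // x ∈ W}) → ℝ :=
    fun ω => ∑ i, if ∃ j, (ω j : M) ∈ C i then ((C i).card : ℝ) else 0 with hX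
  -- the sum of X over all samples, exactly
  have hcsub : ∀ i, (C i).card ≤ n := fun i => Finset.card_le_card (hsub i)
  have hsumX : ∑ ω : Fin m → {x // x ∈ W}, X ω
      = ∑ i, ((C i).card : ℝ) * ((n:ℝ)^m - ((n:ℝ) - ((C i).card : ℝ))^m) := by
    rw [hX, Finset.sum_comm]
    refine Finset.sum_congr rfl fun i _ => ?_
    rw [← Finset.sum_filter]
    rw [Finset.sum_const, nsmul_eq_mul]
    have hmiss := count_miss W m (C i) (hsub i)
    have hsplit := Finset.card_filter_add_card_filter_not
      (s := (Finset.univ : Finset (Fin m → {x // x ∈ W})))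
      (p := fun ω => ∃ j, (ω j : M) ∈ C i)
    rw [hmiss, Finset.card_univ] at hsplit
    have hcardΩ : Fintype.card (Fin m → {x // x ∈ W}) = n ^ m := by
      rw [Fintype.card_fun, Fintype.card_coe, Fintype.card_fin, hn]
    rw [hcardΩ] at hsplit
    have hle : (n - (C i).card) ^ m ≤ n ^ m :=
      Nat.pow_le_pow_left (Nat.sub_le _ _) m
    have hcs : ((Finset.univ.filter fun ω : Fin m → {x // x ∈ W} =>
        ∃ j, (ω j : M) ∈ C i).card : ℝ) = (n:ℝ)^m - ((n:ℝ) - ((C i).card : ℝ))^m := by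
      have h1 : (Finset.univ.filter fun ω : Fin m → {x // x ∈ W} =>
          ∃ j, (ω j : M) ∈ C i).card = n ^ m - (n - (C i).card) ^ m :=
        Nat.eq_sub_of_add_eq hsplit
      rw [h1, Nat.cast_sub hle, Nat.cast_pow, Nat.cast_pow, Nat.cast_sub (hcsub i)]
    rw [hcs]; ring
  -- lower bound on the sum
  have hlow : (n:ℝ)^m * ((n:ℝ)/2) - (n:ℝ)^m * (n:ℝ) * Real.exp (-1) / 2
      ≤ ∑ ω : Fin m → {x // x ∈ W}, X ω := by
    rw [hsumX]
    have hterm : ∀ i, ((C i).card : ℝ) * ((n:ℝ)^m)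
        - (n:ℝ)^m * (n:ℝ) / ((m:ℝ) * Real.exp 1)
        ≤ ((C i).card : ℝ) * ((n:ℝ)^m - ((n:ℝ) - ((C i).card : ℝ))^m) := by
      intro i
      have := aux_cn ((C i).card : ℝ) (n:ℝ) (by positivity)
        (by exact_mod_cast hcsub i) m hm1
      nlinarith [this]
    calc (n:ℝ)^m * ((n:ℝ)/2) - (n:ℝ)^m * (n:ℝ) * Real.exp (-1) / 2
        ≤ ∑ i, (((C i).card : ℝ) * ((n:ℝ)^m)
            - (n:ℝ)^m * (n:ℝ) / ((m:ℝ) * Real.exp 1)) := by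
          rw [Finset.sum_sub_distrib, ← Finset.sum_mul, Finset.sum_const,
            Finset.card_univ, Fintype.card_fin, nsmul_eq_mul]
          have hE : (0:ℝ) < Real.exp 1 := Real.exp_pos 1
          have hkR : (0:ℝ) < (k:ℝ) := by exact_mod_cast hk
          have hmcast : ((m:ℕ):ℝ) = 2 * (k:ℝ) := by rw [hmdef]; push_cast; ring
          have h2 : (k:ℝ) * ((n:ℝ)^m * (n:ℝ) / ((m:ℝ) * Real.exp 1))
              = (n:ℝ)^m * (n:ℝ) * Real.exp (-1) / 2 := by
            rw [hmcast, Real.exp_neg]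
            field_simp
          have h3 : (n:ℝ)^m * ((n:ℝ)/2) ≤ (∑ i, ((C i).card : ℝ)) * (n:ℝ)^m := by
            have : (n:ℝ)/2 ≤ ∑ i, ((C i).card : ℝ) := by
              rw [hn] at hcard ⊢; linarith [hcard]
            nlinarith [this]
          rw [h2]
          linarith [h3]
      _ ≤ _ := Finset.sum_le_sum fun i _ => hterm i
  -- upper bound via the event
  set A : Finset (Fin m → {x // x ∈ W}) :=
    (Finset.univ : Finset (Fin m → {x // x ∈ W})).filter
      (fun ω => (n : ℝ) / 4 ≤
        ((W.filter (fun x => ∃ j, dist x (ω j : M) ≤ μ)).card : ℝ)) with hA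
  have hhigh : ∑ ω : Fin m → {x // x ∈ W}, X ω
      ≤ (A.card : ℝ) * (n:ℝ) + (((n:ℝ)^m - (A.card : ℝ))) * ((n:ℝ)/4) := by
    have hsplit := Finset.sum_filter_add_sum_filter_not
      (Finset.univ : Finset (Fin m → {x // x ∈ W}))
      (fun ω => (n : ℝ) / 4 ≤
        ((W.filter (fun x => ∃ j, dist x (ω j : M) ≤ μ)).card : ℝ)) X
    rw [← hsplit]
    rw [← hA] at hsplit
    have h1 : ∑ ω ∈ A, X ω ≤ (A.card : ℝ) * (n:ℝ) := by
      calc ∑ ω ∈ A, X ω ≤ ∑ ω ∈ A, (n:ℝ) := by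
            refine Finset.sum_le_sum fun ω _ => ?_
            rw [hX, hn]
            exact X_le_n W k m C hsub hdisj ω
        _ = (A.card : ℝ) * (n:ℝ) := by rw [Finset.sum_const, nsmul_eq_mul]
    have h2 : ∑ ω ∈ (Finset.univ.filter fun ω => ¬ ((n : ℝ) / 4 ≤
          ((W.filter (fun x => ∃ j, dist x (ω j : M) ≤ μ)).card : ℝ))), X ω
        ≤ (((n:ℝ)^m - (A.card : ℝ))) * ((n:ℝ)/4) := by
      have hcc : ((Finset.univ.filter fun ω : Fin m → {x // x ∈ W} => ¬ ((n : ℝ) / 4 ≤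
          ((W.filter (fun x => ∃ j, dist x (ω j : M) ≤ μ)).card : ℝ))).card : ℝ)
          = (n:ℝ)^m - (A.card : ℝ) := by
        have htot := Finset.card_filter_add_card_filter_not
          (s := (Finset.univ : Finset (Fin m → {x // x ∈ W})))
          (p := fun ω => (n : ℝ) / 4 ≤
            ((W.filter (fun x => ∃ j, dist x (ω j : M) ≤ μ)).card : ℝ))
        rw [Finset.card_univ, Fintype.card_fun, Fintype.card_coe, Fintype.card_fin,
          ← hn] at htot
        rw [← hA] at htot
        have hAle : A.card ≤ n ^ m := Nat.le.intro htot
        have h1 : (Finset.univ.filter fun ω : Fin m → {x // x ∈ W} => ¬ ((n : ℝ) / 4 ≤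
          ((W.filter (fun x => ∃ j, dist x (ω j : M) ≤ μ)).card : ℝ))).card
            = n ^ m - A.card := Nat.eq_sub_of_add_eq' htot
        rw [h1, Nat.cast_sub hAle, Nat.cast_pow]
      calc _ ≤ ∑ ω ∈ (Finset.univ.filter fun ω : Fin m → {x // x ∈ W} => ¬ ((n : ℝ) / 4 ≤
            ((W.filter (fun x => ∃ j, dist x (ω j : M) ≤ μ)).card : ℝ))), (n:ℝ)/4 := by
            refine Finset.sum_le_sum fun ω hω => ?_
            have hω' := (Finset.mem_filter.mp hω).2
            push_neg at hω'
            refine le_trans ?_ hω'.le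
            rw [hX]
            exact X_le_N W k m C hsub hdisj μ hdiam ω
        _ = _ := by rw [Finset.sum_const, nsmul_eq_mul, hcc]
    exact add_le_add h1 h2
  -- conclude
  have hfinal := le_trans hlow hhigh
  clear_value X A n m μ
  rw [le_div_iff₀ hPow]
  have hAnn : (0:ℝ) ≤ (A.card : ℝ) := Nat.cast_nonneg _
  nlinarith [hfinal, hnR, hPow, mul_pos hPow hnR]
end
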